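/- Let L_d = σ^d(0). Then L_d has length 2^{d+1} - 1, and for every d ≥ 4, δ(L_d) ≥ (d-1)/8. In particular, the family {L_d : d ∈ ℕ} satisfies δ(L_d) = Ω(log n), where n = |L_d|, even though every member of the family is generated by an L-system of constant size. -/

import Mathlib

/-- The morphism σ on {0,1} (0 ↦ false, 1 ↦ true) with σ(0) = 001 and σ(1) = 1,
given by its images on symbols. -/
def sigmaRule : Bool → List Bool
  | false => [false, false, true]
  | true => [true]

/-- The homomorphic extension of σ to strings. -/
def sigmaM (w : List Bool) : List Bool := w.flatMap sigmaRule


/-- `subCount w k`: the number of distinct substrings of length `k` of `w`. -/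
def subCount (w : List Bool) (k : ℕ) : ℕ :=
  (((w.tails.map (fun t => t.take k)).filter (fun s => s.length == k)).dedup).length

/-- The measure δ(w) = max{ S_w(k)/k : 1 ≤ k ≤ |w| }, as a real number. -/
noncomputable def deltaM (w : List Bool) : ℝ :=
  sSup { x : ℝ | ∃ k, 1 ≤ k ∧ k ≤ w.length ∧ x = (subCount w k : ℝ) / k }

/-- The homomorphic extension of a morphism `R : V → V⁺` to strings. -/
def morphApply {V : Type} (R : V → List V) (w : List V) : List V := w.flatMap R

/-- An L-system `(V, R, S, τ, d, n)`: a rule per symbol, an axiom, a coding `τ`,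
a level `d` where to stop, and the length `n` of the string to generate. -/
structure LSystem (V Γ : Type) where
  R : V → List V
  ax : List V
  coding : V → Γ
  d : ℕ
  n : ℕ

/-- The levels of an L-system: `L_0 = S` and `L_{i+1} = R(L_i)`. -/
def LSystem.level {V Γ : Type} (L : LSystem V Γ) (i : ℕ) : List V :=
  (morphApply L.R)^[i] L.ax

/-- Well-formedness: nonempty axiom and nonempty right-hand sides. -/
def LSystem.WF {V Γ : Type} (L : LSystem V Γ) : Prop :=
  L.ax ≠ [] ∧ ∀ A, L.R A ≠ []

/-- The size of an L-system: `|S| + Σ_{A ∈ V} |R(A)|`. -/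
def LSystem.size {V Γ : Type} [Fintype V] (L : LSystem V Γ) : ℕ :=
  L.ax.length + ∑ A, (L.R A).length

/-- The L-system generates `w = τ(L_d[1,n])`, the coding applied to the
length-`n` prefix of level `d`. -/
def LGenerates {V Γ : Type} (L : LSystem V Γ) (w : List Γ) : Prop :=
  w = ((L.level L.d).take L.n).map L.coding

/-- `ℓ(w)`: the size of the smallest L-system generating `w`. -/
noncomputable def lMeasure {Γ : Type} (w : List Γ) : ℕ :=
  sInf { s | ∃ v, ∃ L : LSystem (Fin v) Γ, L.WF ∧ LGenerates L w ∧ L.size = s }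

def wrd (d : ℕ) : List Bool := sigmaM^[d] [false]

lemma sigmaM_append (a b : List Bool) : sigmaM (a ++ b) = sigmaM a ++ sigmaM b :=
  List.flatMap_append (xs := a) (ys := b) (f := sigmaRule)

lemma sigma_iter_append (d : ℕ) (a b : List Bool) :
    sigmaM^[d] (a ++ b) = sigmaM^[d] a ++ sigmaM^[d] b := by
  induction d generalizing a b with
  | zero => simp
  | succ d ih => simp [Function.iterate_succ_apply, sigmaM_append, ih]

lemma sigma_iter_true (d : ℕ) : sigmaM^[d] [true] = [true] := by
  induction d with
  | zero => rfl
  | succ d ih => rw [Function.iterate_succ_apply]; simpa [sigmaM, sigmaRule] using ih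

lemma wrd_succ (d : ℕ) : wrd (d + 1) = wrd d ++ (wrd d ++ [true]) := by
  have h1 : sigmaM [false] = [false] ++ ([false] ++ [true]) := rfl
  rw [wrd, Function.iterate_succ_apply, h1, sigma_iter_append, sigma_iter_append,
    sigma_iter_true]
  rfl

lemma wrd_len (d : ℕ) : (wrd d).length = 2 ^ (d + 1) - 1 := by
  induction d with
  | zero => rfl
  | succ d ih =>
    have h1 : (1:ℕ) ≤ 2 ^ (d + 1) := Nat.one_le_two_pow
    simp only [wrd_succ, List.length_append, List.length_singleton, ih, pow_succ]
    omega

lemma wrd_prefix_le {a b : ℕ} (h : a ≤ b) : wrd a <+: wrd b := by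
  induction b, h using Nat.le_induction with
  | base => exact List.prefix_rfl
  | succ b _ ih => exact ih.trans (by rw [wrd_succ]; exact List.prefix_append _ _)

lemma wrd_head (d : ℕ) : ∃ t, wrd d = false :: t := by
  obtain ⟨t, ht⟩ := wrd_prefix_le (Nat.zero_le d)
  exact ⟨t, by simpa [wrd] using ht.symm⟩

lemma wrd_suffix (d : ℕ) (hd : 1 ≤ d) :
    ∃ p : List Bool, wrd d = p ++ (false :: List.replicate d true) := by
  induction d, hd using Nat.le_induction with
  | base => exact ⟨[false], rfl⟩
  | succ d _ ih =>
    obtain ⟨p, hp⟩ := ih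
    refine ⟨wrd d ++ p, ?_⟩
    rw [wrd_succ, hp, List.replicate_succ' (n := d) (a := true)]
    simp

def pat (r : ℕ) : List Bool := false :: List.replicate r true

lemma pat_len (r : ℕ) : (pat r).length = r + 1 := by simp [pat]

lemma pat_prefix {r s : ℕ} (h : r ≤ s) : pat r <+: pat s := by
  refine List.cons_prefix_cons.2 ⟨rfl, ?_⟩
  exact ⟨List.replicate (s - r) true, by rw [← List.replicate_add]; congr 1; omega⟩

lemma key_unique : ∀ r, 1 ≤ r → ∀ q, pat r <+: (wrd r).drop q → q + (r + 2) = 2 ^ (r + 1)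
  := by
  intro r hr
  induction r, hr using Nat.le_induction with
  | base =>
    intro q h
    have hw : wrd 1 = [false, false, true] := rfl
    rw [hw] at h
    rcases q with _ | _ | _ | q
    · exact absurd h (by decide)
    · rfl
    · exact absurd h (by decide)
    · have := h.length_le
      simp [pat] at this
  | succ r hr ih =>
    intro q h
    have hN : (wrd r).length = 2 ^ (r + 1) - 1 := wrd_len r
    have hN1 : (wrd (r + 1)).length = 2 ^ (r + 2) - 1 := wrd_len (r + 1)
    have h2 : (2:ℕ) ≤ 2 ^ (r + 1) := by
      calc (2:ℕ) = 2 ^ 1 := rfl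
      _ ≤ 2 ^ (r + 1) := Nat.pow_le_pow_right (by norm_num) (by omega)
    have h4 : 2 ^ (r + 2) = 2 * 2 ^ (r + 1) := by ring
    have hlen := h.length_le
    rw [List.length_drop, pat_len] at hlen
    -- hlen : r + 2 ≤ (wrd (r+1)).length - q
    by_cases hc : (wrd r).length ≤ q
    · -- in the second half
      have hdrop : (wrd (r + 1)).drop q
          = (wrd r ++ [true]).drop (q - (wrd r).length) := by
        rw [wrd_succ, List.drop_append,
          List.drop_eq_nil_of_le hc, List.nil_append]
      rw [hdrop] at h
      set q' := q - (wrd r).length with hq'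
      have hlen2 := h.length_le
      rw [List.length_drop, pat_len, List.length_append] at hlen2
      -- hlen2 : r + 2 ≤ N + 1 - q'
      have hq'le : q' ≤ (wrd r).length := by simp at hlen2; omega
      have hdrop2 : (wrd r ++ [true]).drop q' = (wrd r).drop q' ++ [true] := by
        rw [List.drop_append, Nat.sub_eq_zero_of_le hq'le]; rfl
      rw [hdrop2] at h
      by_cases hc2 : q' + (r + 2) ≤ (wrd r).length
      · exfalso
        have hin : pat (r + 1) <+: (wrd r).drop q' :=
          List.prefix_of_prefix_length_le h (List.prefix_append _ _)
            (by rw [pat_len, List.length_drop]; omega)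
        have hin' : pat r <+: (wrd r).drop q' := (pat_prefix (by omega)).trans hin
        have := ih q' hin'
        omega
      · -- pattern ends exactly at the final true
        have hin : pat r <+: (wrd r).drop q' :=
          List.prefix_of_prefix_length_le ((pat_prefix (by omega)).trans h)
            (List.prefix_append _ _)
            (by rw [pat_len, List.length_drop]; simp at hlen2; omega)
        have := ih q' hin
        omega
    · push_neg at hc
      by_cases hc2 : q + (r + 2) ≤ (wrd r).length
      · -- fully inside the first half : impossible
        exfalso
        have hdrop : (wrd (r + 1)).drop q
            = (wrd r).drop q ++ (wrd r ++ [true]) := by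
          rw [wrd_succ, List.drop_append,
            Nat.sub_eq_zero_of_le hc.le]; rfl
        rw [hdrop] at h
        have hin : pat (r + 1) <+: (wrd r).drop q :=
          List.prefix_of_prefix_length_le h (List.prefix_append _ _)
            (by rw [pat_len, List.length_drop]; omega)
        have hin' : pat r <+: (wrd r).drop q := (pat_prefix (by omega)).trans hin
        have := ih q hin'
        omega
      · -- straddles the boundary : impossible
        exfalso
        obtain ⟨t', hte⟩ : ∃ t', (wrd r).length - q = t' + 1 :=
          ⟨(wrd r).length - q - 1, by omega⟩
        have ht1 : t' ≤ r := by omega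
        obtain ⟨s, hs⟩ := h
        have e2 : (wrd (r + 1)).drop (q + (t' + 1))
            = (pat (r + 1)).drop (t' + 1) ++ s := by
          rw [← List.drop_drop, ← hs, List.drop_append,
            Nat.sub_eq_zero_of_le (by rw [pat_len]; omega), List.drop_zero]
        have e3 : q + (t' + 1) = (wrd r).length := by omega
        have e4 : (pat (r + 1)).drop (t' + 1) = List.replicate (r + 1 - t') true := by
          simp [pat, List.drop_replicate]
        have e5 : ∃ u, List.replicate (r + 1 - t') true = true :: u :=
          ⟨List.replicate (r - t') true, by
            have : r + 1 - t' = (r - t') + 1 := by omega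
            rw [this, List.replicate_succ]⟩
        obtain ⟨u, hu⟩ := e5
        obtain ⟨tl, htl⟩ := wrd_head r
        rw [e3, wrd_succ, List.drop_left, e4, hu, htl] at e2
        simp at e2

lemma no_pat_in_take (j0 n q : ℕ) (hj0 : 1 ≤ j0) (hn : n ≤ 2 ^ (j0 + 1) - 2)
    (h : pat j0 <+: ((wrd j0).take n).drop q) : False := by
  have h1 : ((wrd j0).take n).drop q = ((wrd j0).drop q).take (n - q) := by
    rw [List.drop_take]
  rw [h1] at h
  have h2 : pat j0 <+: (wrd j0).drop q := h.trans (List.take_prefix _ _)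
  have h3 := key_unique j0 hj0 q h2
  have h4 := h.length_le
  rw [pat_len, List.length_take] at h4
  have h5 : j0 + 1 ≤ n - q := le_trans h4 (min_le_left _ _)
  have h6 : (2:ℕ) ≤ 2 ^ (j0 + 1) := by
    calc (2:ℕ) = 2 ^ 1 := rfl
    _ ≤ 2 ^ (j0 + 1) := Nat.pow_le_pow_right (by norm_num) (by omega)
  omega

lemma occ_at (j0 j o : ℕ) (P R s : List Bool) (hj : j0 ≤ j) (hP : P.length = o)
    (hs : s = P ++ (pat j ++ R)) : pat j0 <+: s.drop o := by
  have e : s.drop o = pat j ++ R := by rw [hs, ← hP, List.drop_left]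
  rw [e]
  exact (pat_prefix hj).trans (List.prefix_append _ _)

lemma occ_le (j0 k j o q : ℕ) (P s : List Bool)
    (hj0 : 1 ≤ j0) (hj : j0 ≤ j) (hP : P.length = o) (ho : o + j + 2 ≤ k)
    (hk : k ≤ 2 ^ j0)
    (hs : s = P ++ (pat j ++ (wrd j0).take (k - (o + j + 1))))
    (hq : pat j0 <+: s.drop q) : q ≤ o := by
  by_contra hqo
  push_neg at hqo
  set R := (wrd j0).take (k - (o + j + 1)) with hR
  by_cases hcase : q ≤ o + j
  · -- q lands inside the run of ones
    obtain ⟨m, hm⟩ : ∃ m, q - o = m + 1 := ⟨q - o - 1, by omega⟩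
    have hmj : m < j := by omega
    have e1 : s.drop q = List.replicate (j - m) true ++ R := by
      rw [hs, List.drop_append, List.drop_eq_nil_of_le (by omega),
        List.nil_append, hP, hm]
      have e2 : pat j ++ R = false :: (List.replicate j true ++ R) := by simp [pat]
      rw [e2, List.drop_succ_cons, List.drop_append,
        List.drop_replicate, List.length_replicate,
        Nat.sub_eq_zero_of_le (le_of_lt hmj), List.drop_zero]
    obtain ⟨c0, hc0⟩ : ∃ c0, j - m = c0 + 1 := ⟨j - m - 1, by omega⟩
    have hc : List.replicate (j - m) true = true :: List.replicate c0 true := by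
      rw [hc0, List.replicate_succ]
    rw [e1, hc] at hq
    obtain ⟨u, hu⟩ := hq
    simp [pat] at hu
  · -- q lands inside the right part R
    push_neg at hcase
    have e1 : s.drop q = R.drop (q - (o + j + 1)) := by
      rw [hs, ← List.append_assoc, List.drop_append,
        List.drop_eq_nil_of_le (by simp [hP, pat_len]; omega), List.nil_append]
      congr 1
      simp [hP, pat_len]
      omega
    rw [e1] at hq
    have h6 : (1:ℕ) ≤ 2 ^ j0 := Nat.one_le_two_pow
    have h7 : 2 ^ (j0 + 1) = 2 * 2 ^ j0 := by ring
    exact no_pat_in_take j0 (k - (o + j + 1)) (q - (o + j + 1)) hj0 (by omega) hq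

def subS (j0 k j o : ℕ) : List Bool :=
  (wrd j).drop ((wrd j).length - (o + j + 1)) ++ (wrd j0).take (k - (o + j + 1))

lemma pow_facts (j0 j : ℕ) (hj : j0 ≤ j) :
    2 ^ j0 ≤ 2 ^ j ∧ 2 ^ (j + 1) = 2 * 2 ^ j ∧ 2 ^ (j0 + 1) = 2 * 2 ^ j0 ∧
      (1:ℕ) ≤ 2 ^ j0 := by
  exact ⟨Nat.pow_le_pow_right (by norm_num) hj, by ring, by ring, Nat.one_le_two_pow⟩

lemma subS_decomp (j0 k j o : ℕ) (hj0 : 1 ≤ j0) (hj : j0 ≤ j) (ho : o + j + 2 ≤ k)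
    (hk : k ≤ 2 ^ j0) :
    ∃ P : List Bool, P.length = o ∧
      subS j0 k j o = P ++ (pat j ++ (wrd j0).take (k - (o + j + 1))) := by
  obtain ⟨p, hp⟩ := wrd_suffix j (le_trans hj0 hj)
  have hp' : wrd j = p ++ pat j := hp
  have hNj : (wrd j).length = 2 ^ (j + 1) - 1 := wrd_len j
  obtain ⟨hf1, hf2, hf3, hf4⟩ := pow_facts j0 j hj
  have hlen : (wrd j).length = p.length + (j + 1) := by rw [hp']; simp [pat_len]
  have hop : o ≤ p.length := by omega
  have e : (wrd j).drop ((wrd j).length - (o + j + 1))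
      = p.drop (p.length - o) ++ pat j := by
    rw [hp', List.length_append, pat_len]
    have ha : p.length + (j + 1) - (o + j + 1) = p.length - o := by omega
    rw [ha, List.drop_append,
      Nat.sub_eq_zero_of_le (Nat.sub_le _ _), List.drop_zero]
  refine ⟨p.drop (p.length - o), by simp; omega, ?_⟩
  rw [subS, e, List.append_assoc]

lemma subS_len (j0 k j o : ℕ) (hj0 : 1 ≤ j0) (hj : j0 ≤ j) (ho : o + j + 2 ≤ k)
    (hk : k ≤ 2 ^ j0) : (subS j0 k j o).length = k := by
  obtain ⟨hf1, hf2, hf3, hf4⟩ := pow_facts j0 j hj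
  rw [subS, List.length_append, List.length_drop, List.length_take, wrd_len, wrd_len,
    Nat.min_eq_left (by omega)]
  omega

lemma subS_infix (d j0 k j o : ℕ) (hj0 : 1 ≤ j0) (hj : j0 ≤ j) (hjd : j + 1 ≤ d)
    (ho : o + j + 2 ≤ k) (hk : k ≤ 2 ^ j0) : subS j0 k j o <:+: wrd d := by
  obtain ⟨hf1, hf2, hf3, hf4⟩ := pow_facts j0 j hj
  have hm : k - (o + j + 1) ≤ (wrd j0).length := by rw [wrd_len]; omega
  have htk : (wrd j0).take (k - (o + j + 1)) = (wrd j).take (k - (o + j + 1)) := by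
    obtain ⟨c, hc⟩ := wrd_prefix_le hj
    rw [← hc, List.take_append, Nat.sub_eq_zero_of_le hm,
      List.take_zero, List.append_nil]
  have hinf : subS j0 k j o <:+: wrd (j + 1) := by
    refine ⟨(wrd j).take ((wrd j).length - (o + j + 1)),
      (wrd j).drop (k - (o + j + 1)) ++ [true], ?_⟩
    rw [subS, htk, wrd_succ]
    simp only [List.append_assoc]
    rw [← List.append_assoc ((wrd j).take (k - (o + j + 1)))
        ((wrd j).drop (k - (o + j + 1))) [true], List.take_append_drop,
      ← List.append_assoc ((wrd j).take ((wrd j).length - (o + j + 1)))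
        ((wrd j).drop ((wrd j).length - (o + j + 1))) _, List.take_append_drop]
  exact hinf.trans (wrd_prefix_le hjd).isInfix

lemma pat_clash (j0 k j j' o : ℕ) (ho : o + j + 2 ≤ k) (hlt : j < j')
    (e : pat j ++ (wrd j0).take (k - (o + j + 1))
       = pat j' ++ (wrd j0).take (k - (o + j' + 1))) : False := by
  have h := congrArg (List.drop (j + 1)) e
  rw [List.drop_left' (pat_len j)] at h
  rw [List.drop_append, pat_len j'] at h
  have hz : j + 1 - (j' + 1) = 0 := by omega
  rw [hz, List.drop_zero] at h
  have e1 : (pat j').drop (j + 1) = List.replicate (j' - j) true := by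
    simp [pat, List.drop_replicate]
  obtain ⟨c0, hc0⟩ : ∃ c0, j' - j = c0 + 1 := ⟨j' - j - 1, by omega⟩
  obtain ⟨t, ht⟩ := wrd_head j0
  obtain ⟨m', hm'⟩ : ∃ m', k - (o + j + 1) = m' + 1 := ⟨k - (o + j + 1) - 1, by omega⟩
  rw [e1, hc0, List.replicate_succ, ht, hm', List.take_succ_cons] at h
  simp at h

lemma subS_inj (j0 k j o j' o' : ℕ) (hj0 : 1 ≤ j0) (hj : j0 ≤ j) (hj' : j0 ≤ j')
    (ho : o + j + 2 ≤ k) (ho' : o' + j' + 2 ≤ k) (hk : k ≤ 2 ^ j0)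
    (heq : subS j0 k j o = subS j0 k j' o') : j = j' ∧ o = o' := by
  obtain ⟨P, hP, hs⟩ := subS_decomp j0 k j o hj0 hj ho hk
  obtain ⟨P', hP', hs'⟩ := subS_decomp j0 k j' o' hj0 hj' ho' hk
  have h1 : pat j0 <+: (subS j0 k j o).drop o := occ_at j0 j o P _ _ hj hP hs
  have h1' : pat j0 <+: (subS j0 k j' o').drop o' := occ_at j0 j' o' P' _ _ hj' hP' hs'
  have h2 : o' ≤ o :=
    occ_le j0 k j o o' P (subS j0 k j o) hj0 hj hP ho hk hs (by rw [heq]; exact h1')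
  have h2' : o ≤ o' :=
    occ_le j0 k j' o' o P' (subS j0 k j' o') hj0 hj' hP' ho' hk hs' (by rw [← heq]; exact h1)
  have hoo : o = o' := le_antisymm h2' h2
  subst hoo
  have d1 : (subS j0 k j o).drop o = pat j ++ (wrd j0).take (k - (o + j + 1)) := by
    rw [hs, ← hP, List.drop_left]
  have d2 : (subS j0 k j' o).drop o = pat j' ++ (wrd j0).take (k - (o + j' + 1)) := by
    rw [hs', ← hP', List.drop_left]
  have e : pat j ++ (wrd j0).take (k - (o + j + 1))
      = pat j' ++ (wrd j0).take (k - (o + j' + 1)) := by rw [← d1, ← d2, heq]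
  rcases lt_trichotomy j j' with hlt | heqj | hgt
  · exact (pat_clash j0 k j j' o ho hlt e).elim
  · exact ⟨heqj, rfl⟩
  · exact (pat_clash j0 k j' j o ho' hgt e.symm).elim

lemma subCount_lb (d j0 k : ℕ) (hj0 : 1 ≤ j0) (hj0d : j0 ≤ d - 1) (hd : 4 ≤ d)
    (hk2d : 2 * d ≤ k) (hk : k ≤ 2 ^ j0) :
    (d - j0) * (k - d) ≤ subCount (wrd d) k := by
  classical
  set lst := (((wrd d).tails.map (fun t => t.take k)).filter
    (fun s => s.length == k)) with hlst
  have hsub : subCount (wrd d) k = lst.toFinset.card := by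
    rw [subCount, ← List.card_toFinset]
  set T : Finset (ℕ × ℕ) := Finset.Icc j0 (d - 1) ×ˢ Finset.range (k - d) with hT
  have hmemrange : ∀ x ∈ T, j0 ≤ x.1 ∧ x.1 + 1 ≤ d ∧ x.2 + x.1 + 2 ≤ k := by
    intro x hx
    rw [hT, Finset.mem_product, Finset.mem_Icc, Finset.mem_range] at hx
    omega
  have hmem : ∀ x ∈ T, subS j0 k x.1 x.2 ∈ lst.toFinset := by
    intro x hx
    obtain ⟨ha, hb, hc⟩ := hmemrange x hx
    have hlenx : (subS j0 k x.1 x.2).length = k :=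
      subS_len j0 k x.1 x.2 hj0 ha (by omega) hk
    rw [List.mem_toFinset, hlst, List.mem_filter]
    constructor
    · rw [List.mem_map]
      obtain ⟨u, v, huv⟩ := subS_infix d j0 k x.1 x.2 hj0 ha (by omega) (by omega) hk
      refine ⟨subS j0 k x.1 x.2 ++ v, ?_, ?_⟩
      · rw [List.mem_tails]
        exact ⟨u, by rw [← List.append_assoc, huv]⟩
      · rw [List.take_left' hlenx]
    · simp [hlenx]
  have hinj : Set.InjOn (fun x : ℕ × ℕ => subS j0 k x.1 x.2) T := by
    intro x hx y hy hxy
    obtain ⟨ha, hb, hc⟩ := hmemrange x hx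
    obtain ⟨ha', hb', hc'⟩ := hmemrange y hy
    obtain ⟨e1, e2⟩ := subS_inj j0 k x.1 x.2 y.1 y.2 hj0 ha ha'
      (by omega) (by omega) hk hxy
    exact Prod.ext e1 e2
  calc (d - j0) * (k - d) = T.card := by
        rw [hT, Finset.card_product, Nat.card_Icc, Finset.card_range]
        congr 1
        omega
    _ = (T.image (fun x : ℕ × ℕ => subS j0 k x.1 x.2)).card :=
        (Finset.card_image_of_injOn hinj).symm
    _ ≤ lst.toFinset.card :=
        Finset.card_le_card (Finset.image_subset_iff.2 hmem)
    _ = subCount (wrd d) k := hsub.symm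

lemma deltaM_ge (w : List Bool) (k : ℕ) (h1 : 1 ≤ k) (h2 : k ≤ w.length) :
    (subCount w k : ℝ) / k ≤ deltaM w := by
  apply le_csSup
  · refine ⟨(w.length + 1 : ℝ), ?_⟩
    rintro x ⟨k', hk'1, hk'2, rfl⟩
    have hsc : subCount w k' ≤ w.length + 1 := by
      calc subCount w k' ≤ ((w.tails.map (fun t => t.take k')).filter
            (fun s => s.length == k')).length := (List.dedup_sublist _).length_le
        _ ≤ (w.tails.map (fun t => t.take k')).length := List.length_filter_le _ _
        _ = w.length + 1 := by simp
    have hk'r : (1:ℝ) ≤ (k' : ℝ) := by exact_mod_cast hk'1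
    calc (subCount w k' : ℝ) / k' ≤ (subCount w k' : ℝ) :=
          div_le_self (by positivity) hk'r
      _ ≤ (w.length + 1 : ℝ) := by exact_mod_cast hsc
  · exact ⟨k, h1, h2, rfl⟩

lemma two_mul_le_pow : ∀ d, 4 ≤ d → 2 * d ≤ 2 ^ ((3 * d + 1) / 4) := by
  intro d
  induction d using Nat.strong_induction_on with
  | _ d ih =>
    intro hd
    by_cases h12 : d < 12
    · interval_cases d <;> decide
    · have h1 := ih (d - 4) (by omega) (by omega)
      have e : (3 * d + 1) / 4 = (3 * (d - 4) + 1) / 4 + 3 := by omega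
      rw [e, pow_add]
      have : 2 * (d - 4) * 2 ^ 3 ≤ 2 ^ ((3 * (d - 4) + 1) / 4) * 2 ^ 3 :=
        Nat.mul_le_mul_right _ h1
      omega

lemma main2 (d : ℕ) (hd : 4 ≤ d) : ((d : ℝ) - 1) / 8 ≤ deltaM (wrd d) := by
  set j0 := Nat.clog 2 (2 * d) with hj0def
  have hk2d : 2 * d ≤ 2 ^ j0 := Nat.le_pow_clog (by norm_num) _
  have hj0u : 4 * j0 ≤ 3 * d + 1 := by
    have h1 : j0 ≤ (3 * d + 1) / 4 :=
      (Nat.clog_le_iff_le_pow (by norm_num)).2 (two_mul_le_pow d hd)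
    omega
  have hj01 : 1 ≤ j0 := by
    rcases Nat.eq_zero_or_pos j0 with h0 | h1
    · rw [h0] at hk2d; simp at hk2d; omega
    · exact h1
  have hj0d : j0 ≤ d - 1 := by omega
  have hkle : 2 ^ j0 ≤ 2 ^ d := Nat.pow_le_pow_right (by norm_num) (by omega)
  have hlen : (wrd d).length = 2 ^ (d + 1) - 1 := wrd_len d
  have h2d1 : 2 ^ (d + 1) = 2 * 2 ^ d := by ring
  have hdle : (4:ℕ) ≤ 2 ^ d := by
    calc (4:ℕ) = 2 ^ 2 := rfl
    _ ≤ 2 ^ d := Nat.pow_le_pow_right (by norm_num) (by omega)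
  have hkn : 2 ^ j0 ≤ (wrd d).length := by omega
  have hk1 : 1 ≤ 2 ^ j0 := Nat.one_le_two_pow
  have hcount := subCount_lb d j0 (2 ^ j0) hj01 hj0d hd hk2d (le_refl _)
  have hδ := deltaM_ge (wrd d) (2 ^ j0) hk1 hkn
  refine le_trans ?_ hδ
  rw [div_le_div_iff₀ (by norm_num) (by positivity)]
  have hnat : (d - 1) * 2 ^ j0 ≤ subCount (wrd d) (2 ^ j0) * 8 := by
    calc (d - 1) * 2 ^ j0 ≤ (4 * (d - j0)) * (2 * (2 ^ j0 - d)) :=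
          Nat.mul_le_mul (by omega) (by omega)
      _ = ((d - j0) * (2 ^ j0 - d)) * 8 := by ring
      _ ≤ subCount (wrd d) (2 ^ j0) * 8 := Nat.mul_le_mul_right _ hcount
  have hc : ((d:ℝ) - 1) = ((d - 1 : ℕ) : ℝ) := by
    rw [Nat.cast_sub (by omega)]
    norm_num
  rw [hc]
  calc ((d - 1 : ℕ) : ℝ) * (2 ^ j0 : ℕ) = (((d - 1) * 2 ^ j0 : ℕ) : ℝ) := by push_cast; ring
    _ ≤ ((subCount (wrd d) (2 ^ j0) * 8 : ℕ) : ℝ) := by exact_mod_cast hnat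
    _ = (subCount (wrd d) (2 ^ j0) : ℝ) * 8 := by push_cast; ring



lemma main3 (d : ℕ) (hd : 4 ≤ d) :
    (1/16 : ℝ) * Real.logb 2 ((wrd d).length : ℝ) ≤ deltaM (wrd d) := by
  have h2 := main2 d hd
  have hlen : (wrd d).length = 2 ^ (d + 1) - 1 := wrd_len d
  have h1 : ((wrd d).length : ℝ) ≤ (2:ℝ) ^ (d + 1) := by
    rw [hlen]
    have : (1:ℕ) ≤ 2 ^ (d + 1) := Nat.one_le_two_pow
    push_cast [Nat.cast_sub this]
    norm_num
  have hpos : (0:ℝ) < ((wrd d).length : ℝ) := by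
    rw [hlen]
    have h4 : (2:ℕ) ≤ 2 ^ (d + 1) := by
      calc (2:ℕ) = 2 ^ 1 := rfl
      _ ≤ 2 ^ (d + 1) := Nat.pow_le_pow_right (by norm_num) (by omega)
    have : (1:ℕ) ≤ 2 ^ (d + 1) - 1 := by omega
    exact_mod_cast Nat.lt_of_lt_of_le Nat.zero_lt_one this
  have hlog : Real.logb 2 ((wrd d).length : ℝ) ≤ (d : ℝ) + 1 := by
    calc Real.logb 2 ((wrd d).length : ℝ) ≤ Real.logb 2 ((2:ℝ) ^ (d + 1)) :=
          Real.logb_le_logb_of_le (by norm_num) hpos h1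
      _ = ((d : ℝ) + 1) * Real.logb 2 2 := by
          rw [Real.logb_pow]; push_cast; ring
      _ = (d : ℝ) + 1 := by rw [Real.logb_self_eq_one (by norm_num)]; ring
  have hlog0 : (0:ℝ) ≤ Real.logb 2 ((wrd d).length : ℝ) := by
    apply Real.logb_nonneg (by norm_num)
    rw [hlen]
    have h4 : (2:ℕ) ≤ 2 ^ (d + 1) := by
      calc (2:ℕ) = 2 ^ 1 := rfl
      _ ≤ 2 ^ (d + 1) := Nat.pow_le_pow_right (by norm_num) (by omega)
    have : (1:ℕ) ≤ 2 ^ (d + 1) - 1 := by omega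
    exact_mod_cast this
  have hdr : (4:ℝ) ≤ (d:ℝ) := by exact_mod_cast hd
  calc (1/16 : ℝ) * Real.logb 2 ((wrd d).length : ℝ) ≤ (1/16) * ((d:ℝ) + 1) := by
        apply mul_le_mul_of_nonneg_left hlog (by norm_num)
    _ ≤ ((d : ℝ) - 1) / 8 := by linarith
    _ ≤ deltaM (wrd d) := h2


def lsysR : Fin 2 → List (Fin 2) := ![[0, 0, 1], [1]]

def lsysC : Fin 2 → Bool := ![false, true]

def lsys (d : ℕ) : LSystem (Fin 2) Bool where
  R := lsysR
  ax := [0]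
  coding := lsysC
  d := d
  n := ((morphApply lsysR)^[d] [0]).length

lemma lsys_level (d : ℕ) :
    ((morphApply lsysR)^[d] [0]).map lsysC = sigmaM^[d] [false] := by
  induction d with
  | zero => decide
  | succ d ih =>
    rw [Function.iterate_succ_apply', Function.iterate_succ_apply']
    rw [← ih]
    set y := (morphApply lsysR)^[d] [0] with hy
    rw [morphApply, sigmaM, List.map_flatMap, List.flatMap_map]
    congr 1
    funext a
    fin_cases a <;> decide

lemma main4 (d : ℕ) : lMeasure (sigmaM^[d] [false]) ≤ 5 := by
  apply Nat.sInf_le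
  refine ⟨2, lsys d, ⟨by simp [lsys], fun A => by show lsysR A ≠ []; fin_cases A <;> decide⟩, ?_, ?_⟩
  · rw [LGenerates]
    show sigmaM^[d] [false] = (((morphApply lsysR)^[d] [0]).take
      ((morphApply lsysR)^[d] [0]).length).map lsysC
    rw [List.take_length, lsys_level]
  · show 1 + ∑ A : Fin 2, (lsysR A).length = 5
    decide

/-- Let L_d = σ^d(0). Then |L_d| = 2^{d+1} - 1; for every d ≥ 4,
δ(L_d) ≥ (d-1)/8; in particular δ(L_d) = Ω(log n) where n = |L_d| — even
though every member of the family {L_d : d ∈ ℕ} is generated by an L-system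
of constant size. -/
theorem delta_omega_log_family :
    (∀ d : ℕ, (sigmaM^[d] [false]).length = 2 ^ (d + 1) - 1) ∧
    (∀ d : ℕ, 4 ≤ d → ((d : ℝ) - 1) / 8 ≤ deltaM (sigmaM^[d] [false])) ∧
    (∃ c : ℝ, 0 < c ∧ ∀ d : ℕ, 4 ≤ d →
      c * Real.logb 2 ((sigmaM^[d] [false]).length : ℝ)
        ≤ deltaM (sigmaM^[d] [false])) ∧
    (∃ C : ℕ, ∀ d : ℕ, lMeasure (sigmaM^[d] [false]) ≤ C) := by
  exact ⟨wrd_len, fun d hd => main2 d hd,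
    ⟨1/16, by norm_num, fun d hd => main3 d hd⟩, ⟨5, main4⟩⟩
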